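/- Let N be an acyclic CP-net with induced flip-based preference ≻, and let o₁ = R·x₁·o₁′, o₂ = R·x₂·o₂′ share the ancestor assignment R at variable X, with x₁ ≻ x₂ given R. Let N₁ be the sub-CP-net on the remaining variables obtained by restricting all CPTs to the assignment R·x₁, with induced preference ≻₁. If o₁′ ≻₁ o₂′, then o₁ ≻ o₂. -/

import Mathlib

theorem stmt_13 {n : ℕ} (D : Fin n → Type) [∀ i, Finite (D i)]
    (Pa : Fin n → Set (Fin n)) (hPa : ∀ i j, j ∈ Pa i → j < i)
    (r : ∀ i : Fin n, (∀ j, D j) → D i → D i → Prop)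
    (hdep : ∀ i o o', (∀ j ∈ Pa i, o j = o' j) → ∀ a b, (r i o a b ↔ r i o' a b))
    (hirr : ∀ i o a, ¬ r i o a a)
    (htrans : ∀ i o a b c, r i o a b → r i o b c → r i o a c)
    (htotal : ∀ i o (a b : D i), a ≠ b → r i o a b ∨ r i o b a)
    (flip : (∀ j, D j) → (∀ j, D j) → Prop)
    (hflip : ∀ a b, flip a b ↔ ∃ i, (∀ j, j ≠ i → a j = b j) ∧ r i b (a i) (b i))
    (pref : (∀ j, D j) → (∀ j, D j) → Prop)
    (hpref : ∀ a b, pref a b ↔ Relation.TransGen flip a b)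
(flipA : Fin n → (∀ j, D j) → (∀ j, D j) → Prop)
    (hflipA : ∀ k a b, flipA k a b ↔
      ∃ i, k < i ∧ (∀ j, j ≠ i → a j = b j) ∧ r i b (a i) (b i))
    (o₁ o₂ : ∀ j, D j) (k : Fin n)
    (hR : ∀ j, j < k → o₁ j = o₂ j)
    (hx : r k o₂ (o₁ k) (o₂ k))
    (hsub : Relation.TransGen (flipA k) o₁ (Function.update o₂ k (o₁ k))) :
    pref o₁ o₂ := by
  rw [hpref]
  have h1 : ∀ a b, flipA k a b → flip a b := by
    intro a b h
    obtain ⟨i, _, h2, h3⟩ := (hflipA k a b).mp h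
    exact (hflip a b).mpr ⟨i, h2, h3⟩
  refine (Relation.TransGen.mono h1 _ _ hsub).tail ((hflip _ _).mpr ⟨k, ?_, ?_⟩)
  · intro j hj; exact Function.update_of_ne hj _ _
  · simpa using hx
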